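/- Completeness criterion: a Riemannian manifold (M,g) is complete if it admits a smooth proper function φ : M → ℝ with |∇φ| ≤ 1 everywhere (Gordon's theorem, one direction): properness of φ together with the bound |φ(x) − φ(y)| ≤ d(x,y) forces closed bounded sets to be compact, hence (M, d_g) is complete. -/
import Mathlib

/-- Completeness criterion (one direction of Gordon's theorem): a connected metric space
(such as a Riemannian manifold with its geodesic distance) admitting a proper function
`φ : M → ℝ` which is `1`-Lipschitz (for a Riemannian manifold: `|∇φ| ≤ 1`, which forces
`|φ(x) − φ(y)| ≤ d(x,y)`) is complete: properness of `φ` together with the Lipschitz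
bound forces closed bounded sets to be compact, hence `(M, d)` is complete. -/
theorem complete_of_proper_lipschitz_function {M : Type*} [MetricSpace M]
    [ConnectedSpace M] (φ : M → ℝ) (hlip : LipschitzWith 1 φ)
    (hproper : ∀ K : Set ℝ, IsCompact K → IsCompact (φ ⁻¹' K)) :
    CompleteSpace M := by
  have hproperM : ProperSpace M := by
    constructor
    intro x r
    rcases le_or_gt r 0 with hr | hr
    · rcases lt_or_eq_of_le hr with h | h
      · simp [Metric.closedBall_eq_empty.2 h]
      · simp [h, isCompact_singleton]
    · have hK : IsCompact (φ ⁻¹' Set.Icc (φ x - r) (φ x + r)) :=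
        hproper _ isCompact_Icc
      apply hK.of_isClosed_subset Metric.isClosed_closedBall
      intro y hy
      have := hlip.dist_le_mul y x
      simp only [NNReal.coe_one, one_mul] at this
      have hd : dist y x ≤ r := hy
      have : dist (φ y) (φ x) ≤ r := this.trans hd
      rw [Real.dist_eq, abs_le] at this
      constructor <;> linarith [this.1, this.2]
  infer_instance
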